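/- There exists a sequence b : ℤ₊ → ℝ with the following four properties: the series Σ_{j≥0} b_j converges; the sequence (j·b_j)_{j∈ℤ₊} is bounded; the sequence (j²·(b_j − b_{j+1}))_{j∈ℤ₊} is bounded; and for every integer p ≥ 1 the series Σ_{j≥0} |b_j + b_{j+1} + … + b_{j+p−1}| diverges. -/

import Mathlib

open Filter

namespace LongRangeAux

open Real Finset

noncomputable def LL (x : ℝ) : ℝ := Real.log (x + 2)
noncomputable def FF (x : ℝ) : ℝ := Real.cos (LL x) / LL x
noncomputable def F1 (x : ℝ) : ℝ :=
  (-Real.sin (LL x) * LL x - Real.cos (LL x)) / ((LL x)^2 * (x+2))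
noncomputable def F2 (x : ℝ) : ℝ :=
  ((LL x)^2 * (Real.sin (LL x) - Real.cos (LL x)) + 2 * LL x * Real.sin (LL x)
    + LL x * Real.cos (LL x) + 2 * Real.cos (LL x)) / ((LL x)^3 * (x+2)^2)

lemma LL_pos {x : ℝ} (hx : -1 < x) : 0 < LL x := by
  have : (1:ℝ) < x + 2 := by linarith
  exact Real.log_pos this

lemma hasDerivAt_LL {x : ℝ} (hx : -1 < x) : HasDerivAt LL (1/(x+2)) x := by
  have h2 : x + 2 ≠ 0 := by linarith
  have := ((hasDerivAt_id x).add_const 2).log h2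
  show HasDerivAt (fun y => Real.log (y + 2)) (1/(x+2)) x
  simpa using this

lemma hasDerivAt_FF {x : ℝ} (hx : -1 < x) : HasDerivAt FF (F1 x) x := by
  have hL := hasDerivAt_LL hx
  have hLpos := LL_pos hx
  have hLne : LL x ≠ 0 := ne_of_gt hLpos
  have h2 : x + 2 ≠ 0 := by linarith
  have hcos : HasDerivAt (fun y => Real.cos (LL y)) (-Real.sin (LL x) * (1/(x+2))) x := hL.cos
  have := hcos.div hL hLne
  refine this.congr_deriv ?_
  unfold F1
  field_simp

lemma hasDerivAt_F1 {x : ℝ} (hx : -1 < x) : HasDerivAt F1 (F2 x) x := by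
  have hL := hasDerivAt_LL hx
  have hLpos := LL_pos hx
  have hLne : LL x ≠ 0 := ne_of_gt hLpos
  have h2 : x + 2 ≠ 0 := by linarith
  have hcos : HasDerivAt (fun y => Real.cos (LL y)) (-Real.sin (LL x) * (1/(x+2))) x := hL.cos
  have hsin : HasDerivAt (fun y => Real.sin (LL y)) (Real.cos (LL x) * (1/(x+2))) x := hL.sin
  have hN : HasDerivAt (fun y => -Real.sin (LL y) * LL y - Real.cos (LL y))
      ((-(Real.cos (LL x) * (1/(x+2)))) * LL x + (-Real.sin (LL x)) * (1/(x+2))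
        - (-Real.sin (LL x) * (1/(x+2)))) x := (hsin.neg.mul hL).sub hcos
  have hD : HasDerivAt (fun y => (LL y)^2 * (y+2))
      ((2 * LL x ^ 1 * (1/(x+2))) * (x+2) + (LL x)^2 * 1) x :=
    (hL.pow 2).mul ((hasDerivAt_id x).add_const 2)
  have hDne : (LL x)^2 * (x+2) ≠ 0 := by positivity
  have := hN.div hD hDne
  refine this.congr_deriv ?_
  unfold F2
  field_simp
  ring

lemma LL_ge {x : ℝ} (hx : 0 ≤ x) : 0.6931 ≤ LL x := by
  have h1 : Real.log 2 ≤ LL x := by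
    unfold LL
    apply Real.log_le_log (by norm_num) (by linarith)
  have := Real.log_two_gt_d9
  linarith

lemma F1_bound {x : ℝ} (hx : 0 ≤ x) : |F1 x| ≤ 4/(x+2) := by
  have hL := LL_ge hx
  have h2 : (0:ℝ) < x + 2 := by linarith
  have hs := Real.abs_sin_le_one (LL x)
  have hc := Real.abs_cos_le_one (LL x)
  have hnum : |(-Real.sin (LL x) * LL x - Real.cos (LL x))| ≤ LL x + 1 := by
    calc |(-Real.sin (LL x) * LL x - Real.cos (LL x))|
        ≤ |(-Real.sin (LL x) * LL x)| + |Real.cos (LL x)| := abs_sub _ _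
      _ ≤ LL x + 1 := by
          rw [abs_mul, abs_neg]
          have h3 : |LL x| = LL x := abs_of_pos (by linarith)
          rw [h3]
          nlinarith [abs_nonneg (Real.sin (LL x))]
  have key : LL x + 1 ≤ 4 * (LL x)^2 := by nlinarith
  unfold F1
  rw [abs_div]
  have hden : |(LL x)^2 * (x+2)| = (LL x)^2 * (x+2) := abs_of_pos (by positivity)
  rw [hden, div_le_div_iff₀ (by positivity) (by positivity)]
  nlinarith [mul_le_mul_of_nonneg_right hnum (le_of_lt h2),
    mul_le_mul_of_nonneg_right key (le_of_lt h2)]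

lemma F2_bound {x : ℝ} (hx : 0 ≤ x) : |F2 x| ≤ 16/(x+2)^2 := by
  have hL := LL_ge hx
  have h2 : (0:ℝ) < x + 2 := by linarith
  have hLpos : (0:ℝ) < LL x := by linarith
  set s := Real.sin (LL x) with hsdef
  set c := Real.cos (LL x) with hcdef
  have hs : |s| ≤ 1 := Real.abs_sin_le_one (LL x)
  have hc : |c| ≤ 1 := Real.abs_cos_le_one (LL x)
  have hnum : |(LL x)^2 * (s - c) + 2 * LL x * s + LL x * c + 2 * c|
      ≤ 2*(LL x)^2 + 3*(LL x) + 2 := by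
    have t1 : |(LL x)^2 * (s - c)| ≤ 2*(LL x)^2 := by
      rw [abs_mul, abs_of_nonneg (sq_nonneg _)]
      have : |s - c| ≤ 2 := by
        calc |s - c| ≤ |s| + |c| := abs_sub _ _
          _ ≤ 2 := by linarith
      nlinarith [sq_nonneg (LL x)]
    have t2 : |2 * LL x * s| ≤ 2 * LL x := by
      rw [abs_mul, abs_mul, abs_of_pos hLpos, abs_two]
      nlinarith [abs_nonneg s]
    have t3 : |LL x * c| ≤ LL x := by
      rw [abs_mul, abs_of_pos hLpos]
      nlinarith [abs_nonneg c]
    have t4 : |2 * c| ≤ 2 := by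
      rw [abs_mul, abs_two]
      nlinarith [abs_nonneg c]
    calc |(LL x)^2 * (s - c) + 2 * LL x * s + LL x * c + 2 * c|
        ≤ |(LL x)^2 * (s - c) + 2 * LL x * s + LL x * c| + |2 * c| := abs_add_le _ _
      _ ≤ |(LL x)^2 * (s - c) + 2 * LL x * s| + |LL x * c| + |2 * c| := by
          linarith [abs_add_le ((LL x)^2 * (s - c) + 2 * LL x * s) (LL x * c)]
      _ ≤ |(LL x)^2 * (s - c)| + |2 * LL x * s| + |LL x * c| + |2 * c| := by
          linarith [abs_add_le ((LL x)^2 * (s - c)) (2 * LL x * s)]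
      _ ≤ 2*(LL x)^2 + 3*(LL x) + 2 := by linarith
  have key : 2*(LL x)^2 + 3*(LL x) + 2 ≤ 16 * (LL x)^3 := by nlinarith
  unfold F2
  rw [abs_div]
  have hden : |(LL x)^3 * (x+2)^2| = (LL x)^3 * (x+2)^2 := abs_of_pos (by positivity)
  rw [hden, div_le_div_iff₀ (by positivity) (by positivity)]
  rw [← hsdef, ← hcdef]
  nlinarith [mul_le_mul_of_nonneg_right hnum (le_of_lt (pow_pos h2 2)),
    mul_le_mul_of_nonneg_right key (le_of_lt (pow_pos h2 2))]

lemma mvt (G G' : ℝ → ℝ) (hG : ∀ x : ℝ, -1 < x → HasDerivAt G (G' x) x)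
    {a b : ℝ} (ha : 0 ≤ a) (hab : a < b) :
    ∃ ξ ∈ Set.Ioo a b, G b - G a = G' ξ * (b - a) := by
  have hcont : ContinuousOn G (Set.Icc a b) := fun x hx =>
    (hG x (by have := hx.1; linarith)).continuousAt.continuousWithinAt
  have hderiv : ∀ x ∈ Set.Ioo a b, HasDerivAt G (G' x) x := fun x hx =>
    hG x (by have := hx.1; linarith)
  obtain ⟨ξ, hξ, heq⟩ := exists_hasDerivAt_eq_slope G G' hab hcont hderiv
  refine ⟨ξ, hξ, ?_⟩
  rw [heq]
  field_simp [sub_ne_zero.2 (ne_of_gt hab)]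

lemma lipF1 {a b : ℝ} (ha : 0 ≤ a) (hab : a ≤ b) :
    |F1 b - F1 a| ≤ 16/(a+2)^2 * (b - a) := by
  rcases eq_or_lt_of_le hab with rfl | h
  · simp
  · obtain ⟨η, hη, heq⟩ := mvt F1 F2 (fun x hx => hasDerivAt_F1 hx) ha h
    rw [heq, abs_mul, abs_of_pos (by linarith : (0:ℝ) < b - a)]
    apply mul_le_mul_of_nonneg_right _ (by linarith)
    calc |F2 η| ≤ 16/(η+2)^2 := F2_bound (by have := hη.1; linarith)
      _ ≤ 16/(a+2)^2 := by
          apply div_le_div_of_nonneg_left (by norm_num) (by positivity)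
          have := hη.1
          nlinarith

/-- The sequence. -/
noncomputable def bb (j : ℕ) : ℝ := FF j - FF (j+1)

lemma bb_eq (j : ℕ) : ∃ ξ ∈ Set.Ioo (j:ℝ) ((j:ℝ)+1), bb j = -F1 ξ := by
  obtain ⟨ξ, hξ, heq⟩ := mvt FF F1 (fun x hx => hasDerivAt_FF hx)
    (by positivity : (0:ℝ) ≤ (j:ℝ)) (by linarith : (j:ℝ) < (j:ℝ)+1)
  refine ⟨ξ, hξ, ?_⟩
  have : bb j = -(FF ((j:ℝ)+1) - FF (j:ℝ)) := by
    unfold bb; push_cast; ring_nf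
  rw [this, heq]; ring


-- exp(π) ≥ 20
lemma exp_pi_ge : (20:ℝ) ≤ Real.exp π := by
  have h3 : (3:ℝ) ≤ π := le_of_lt Real.pi_gt_three
  have : Real.exp 3 ≤ Real.exp π := Real.exp_le_exp.2 h3
  have he : Real.exp 3 = Real.exp 1 ^ 3 := by
    rw [← Real.exp_nat_mul]; norm_num
  have h1 := Real.exp_one_gt_d9
  have h2 : (2.7182818283:ℝ)^3 < Real.exp 1 ^ 3 :=
    pow_lt_pow_left₀ h1 (by norm_num) (by norm_num)
  nlinarith

noncomputable def nn (m : ℕ) : ℕ := ⌈Real.exp (π * m)⌉₊ - 2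

lemma exp_pi_mul_ge {m : ℕ} (hm : 1 ≤ m) : (20:ℝ) ≤ Real.exp (π * m) := by
  have : π * 1 ≤ π * m := by
    apply mul_le_mul_of_nonneg_left _ Real.pi_pos.le
    exact_mod_cast hm
  calc (20:ℝ) ≤ Real.exp π := exp_pi_ge
    _ ≤ Real.exp (π * m) := Real.exp_le_exp.2 (by linarith)

lemma nn_cast {m : ℕ} (hm : 1 ≤ m) :
    (nn m : ℝ) + 2 = (⌈Real.exp (π * m)⌉₊ : ℝ) := by
  have h20 := exp_pi_mul_ge hm
  have hle : Real.exp (π * m) ≤ (⌈Real.exp (π * m)⌉₊ : ℝ) := Nat.le_ceil _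
  have h2 : 2 ≤ ⌈Real.exp (π * m)⌉₊ := by
    have : (2:ℝ) ≤ (⌈Real.exp (π * m)⌉₊ : ℝ) := by linarith
    exact_mod_cast this
  unfold nn
  rw [Nat.cast_sub h2]
  ring

lemma u_bounds {m : ℕ} (hm : 1 ≤ m) :
    π * m ≤ LL (nn m) ∧ LL (nn m) ≤ π * m + 1/20 := by
  have h20 := exp_pi_mul_ge hm
  set E := Real.exp (π * m) with hE
  have hEpos : 0 < E := Real.exp_pos _
  have hcast := nn_cast hm
  have hle : E ≤ (⌈E⌉₊ : ℝ) := Nat.le_ceil _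
  have hlt : (⌈E⌉₊ : ℝ) < E + 1 := Nat.ceil_lt_add_one hEpos.le
  have hLL : LL (nn m) = Real.log ((⌈E⌉₊ : ℝ)) := by
    unfold LL; rw [hcast]
  constructor
  · rw [hLL]
    calc π * m = Real.log E := (Real.log_exp _).symm
      _ ≤ _ := Real.log_le_log hEpos hle
  · rw [hLL]
    have hsplit : E + 1 = E * (1 + 1/E) := by field_simp
    have hlog1 : Real.log (1 + 1/E) ≤ 1/E := by
      have := Real.log_le_sub_one_of_pos (show (0:ℝ) < 1 + 1/E by positivity)
      linarith
    calc Real.log ((⌈E⌉₊ : ℝ)) ≤ Real.log (E + 1) := by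
          apply Real.log_le_log (by positivity) hlt.le
      _ = Real.log E + Real.log (1 + 1/E) := by
          rw [hsplit, Real.log_mul (ne_of_gt hEpos) (by positivity)]
      _ ≤ π * m + 1/20 := by
          rw [Real.log_exp]
          have : 1/E ≤ 1/20 := by
            apply div_le_div_of_nonneg_left (by norm_num) (by norm_num) h20
          linarith

lemma hsign {m : ℕ} (hm : 1 ≤ m) : 1/(4*(m:ℝ)) ≤ (-1)^m * FF (nn m) := by
  obtain ⟨hlo, hhi⟩ := u_bounds hm
  set u := LL (nn m) with hu
  have hm1 : (1:ℝ) ≤ (m:ℝ) := by exact_mod_cast hm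
  have hpi := Real.pi_gt_three
  have hpi' := Real.pi_lt_d2
  have hupos : 0 < u := by nlinarith
  set t := u - π * m with ht
  have ht0 : 0 ≤ t := by simp [ht]; linarith
  have ht20 : t ≤ 1/20 := by simp [ht]; linarith
  have hcos_mul : Real.cos ((m:ℝ) * π) = (-1)^m := by
    have := Real.cos_nat_mul_pi_sub 0 m
    simpa using this
  have hsin_mul : Real.sin ((m:ℝ) * π) = 0 := Real.sin_nat_mul_pi m
  have hcosu : Real.cos u = (-1)^m * Real.cos t := by
    have : u = (m:ℝ) * π + t := by rw [ht]; ring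
    rw [this, Real.cos_add, hcos_mul, hsin_mul]
    ring
  have hcost : (0.9:ℝ) ≤ Real.cos t := by
    have := Real.one_sub_sq_div_two_le_cos (x := t)
    nlinarith
  have hFF : FF (nn m) = Real.cos u / u := rfl
  have hsq : ((-1:ℝ))^m * (-1)^m = 1 := by
    rw [← pow_add]
    have : Even (m + m) := Even.add_self m
    exact this.neg_one_pow
  have key : (-1)^m * FF (nn m) = Real.cos t / u := by
    rw [hFF, hcosu]
    field_simp
    nlinarith [hsq]
  rw [key]
  rw [div_le_div_iff₀ (by positivity) hupos]
  nlinarith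

lemma nn_mono {m : ℕ} (hm : 1 ≤ m) : nn m < nn (m+1) := by
  have h20 := exp_pi_mul_ge hm
  have hc1 := nn_cast hm
  have hc2 := nn_cast (le_trans hm (Nat.le_succ m))
  have hlt : (⌈Real.exp (π * m)⌉₊ : ℝ) < Real.exp (π * (m+1)) := by
    have h1 : (⌈Real.exp (π * m)⌉₊ : ℝ) < Real.exp (π * m) + 1 :=
      Nat.ceil_lt_add_one (Real.exp_pos _).le
    have h2 : Real.exp (π * (m+1)) = Real.exp (π * m) * Real.exp π := by
      rw [← Real.exp_add]; ring_nf
    nlinarith [exp_pi_ge, Real.exp_pos (π * m)]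
  have : (nn m : ℝ) < (nn (m+1) : ℝ) := by
    have hle : Real.exp (π * (m+1)) ≤ (⌈Real.exp (π * (m+1))⌉₊ : ℝ) := Nat.le_ceil _
    push_cast at hc2 ⊢
    nlinarith
  exact_mod_cast this

lemma tele_sum (a c : ℕ) (h : a ≤ c) :
    ∑ j ∈ Ico a c, bb j = FF a - FF c := by
  induction c, h using Nat.le_induction with
  | base => simp
  | succ c hc ih =>
    rw [Finset.sum_Ico_succ_top hc, ih]
    unfold bb
    push_cast
    ring

lemma teleAbs (a c : ℕ) (h : a ≤ c) :
    |FF c - FF a| ≤ ∑ j ∈ Ico a c, |bb j| := by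
  rw [abs_sub_comm, ← tele_sum a c h]
  exact Finset.abs_sum_le_sum_abs _ _

lemma block {m : ℕ} (hm : 1 ≤ m) :
    1/(4*(m:ℝ)) ≤ ∑ j ∈ Ico (nn m) (nn (m+1)), |bb j| := by
  have h1 := hsign hm
  have h2 := hsign (m := m+1) (le_trans hm (Nat.le_succ m))
  have hmono := nn_mono hm
  have habs : ((-1:ℝ))^m * (FF (nn m) - FF (nn (m+1))) ≤ |FF (nn (m+1)) - FF (nn m)| := by
    calc ((-1:ℝ))^m * (FF (nn m) - FF (nn (m+1)))
        ≤ |((-1:ℝ))^m * (FF (nn m) - FF (nn (m+1)))| := le_abs_self _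
      _ = |FF (nn (m+1)) - FF (nn m)| := by
          rw [abs_mul, abs_pow, abs_neg, abs_one, one_pow, one_mul, abs_sub_comm]
  have hexp : ((-1:ℝ))^m * (FF (nn m) - FF (nn (m+1)))
      = (-1)^m * FF (nn m) + (-1)^(m+1) * FF (nn (m+1)) := by
    rw [pow_succ]; ring
  have hpos : (0:ℝ) < 1/(4*((m:ℝ)+1)) := by positivity
  have hm1 : (1:ℝ) ≤ (m:ℝ) := by exact_mod_cast hm
  calc 1/(4*(m:ℝ)) ≤ (-1)^m * FF (nn m) + (-1)^(m+1) * FF (nn (m+1)) := by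
        have : 1/(4*((m:ℝ)+1)) ≤ (-1)^(m+1) * FF (nn (m+1)) := by
          have := h2; push_cast at this ⊢; linarith
        linarith
    _ ≤ |FF (nn (m+1)) - FF (nn m)| := by rw [← hexp]; exact habs
    _ ≤ _ := teleAbs _ _ (le_of_lt hmono)

lemma nn_le {M : ℕ} : nn 1 ≤ nn (M+1) := by
  induction M with
  | zero => exact le_refl _
  | succ M ih => exact le_trans ih (le_of_lt (nn_mono (Nat.le_add_left 1 M)))

lemma grow (M : ℕ) :
    ∑ i ∈ range M, 1/(4*((i:ℝ)+1)) ≤ ∑ j ∈ Ico (nn 1) (nn (M+1)), |bb j| := by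
  induction M with
  | zero => simp
  | succ M ih =>
    rw [Finset.sum_range_succ]
    rw [← Finset.sum_Ico_consecutive _ (nn_le (M := M))
      (le_of_lt (nn_mono (Nat.le_add_left 1 M)))]
    have hb := block (m := M+1) (Nat.le_add_left 1 M)
    push_cast at hb ⊢
    linarith

lemma core : ¬ Summable (fun j : ℕ => |bb j|) := by
  intro hS
  have hbound : ∀ M : ℕ, ∑ i ∈ range M, 1/(4*((i:ℝ)+1)) ≤ ∑' j, |bb j| := by
    intro M
    calc ∑ i ∈ range M, 1/(4*((i:ℝ)+1)) ≤ ∑ j ∈ Ico (nn 1) (nn (M+1)), |bb j| := grow M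
      _ ≤ ∑' j, |bb j| := Summable.sum_le_tsum _ (fun j _ => abs_nonneg _) hS
  have htend : Tendsto (fun M => ∑ i ∈ range M, 1/(4*((i:ℝ)+1))) atTop atTop := by
    have h4 : Tendsto (fun M => (1/4 : ℝ) * ∑ i ∈ range M, (1/((i:ℝ)+1))) atTop atTop :=
      (tendsto_sum_range_one_div_nat_succ_atTop).const_mul_atTop (by norm_num)
    convert h4 using 2 with M
    rw [Finset.mul_sum]
    apply Finset.sum_congr rfl
    intro i _
    field_simp
  obtain ⟨M, hM⟩ := (htend.eventually_gt_atTop (∑' j, |bb j|)).exists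
  exact absurd (hbound M) (not_le.2 hM)

-- Part 1
lemma part1 : ∃ L : ℝ, Tendsto (fun N => ∑ j ∈ Finset.range N, bb j) atTop (nhds L) := by
  refine ⟨FF 0, ?_⟩
  have tele : ∀ N : ℕ, ∑ j ∈ Finset.range N, bb j = FF 0 - FF N := by
    intro N
    have : ∀ j : ℕ, bb j = (fun i : ℕ => FF i) j - (fun i : ℕ => FF i) (j+1) := by
      intro j; unfold bb; push_cast; ring
    rw [Finset.sum_congr rfl (fun j _ => this j), Finset.sum_range_sub' (fun i : ℕ => FF i) N]
    norm_num
  simp only [tele]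
  have hFF0 : Tendsto (fun N : ℕ => FF N) atTop (nhds 0) := by
    refine squeeze_zero_norm (a := fun N : ℕ => (LL N)⁻¹) (fun N => ?_) ?_
    · have hL : 0 < LL N := LL_pos (by have : (0:ℝ) ≤ N := Nat.cast_nonneg N; linarith)
      show ‖FF (N:ℝ)‖ ≤ (LL (N:ℝ))⁻¹
      rw [Real.norm_eq_abs]
      unfold FF
      rw [abs_div, abs_of_pos hL, ← one_div]
      gcongr
      exact Real.abs_cos_le_one _
    · have h1 : Tendsto (fun N : ℕ => LL N) atTop atTop := by
        apply Real.tendsto_log_atTop.comp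
        apply tendsto_atTop_add_const_right
        exact tendsto_natCast_atTop_atTop
      exact h1.inv_tendsto_atTop
  have := hFF0.const_sub (FF 0)
  simpa using this

-- Part 2
lemma part2 (j : ℕ) : |(j : ℝ) * bb j| ≤ 4 := by
  obtain ⟨ξ, hξ, heq⟩ := bb_eq j
  have hξ0 : (0:ℝ) ≤ ξ := le_of_lt (lt_of_le_of_lt (Nat.cast_nonneg j) hξ.1)
  have hb := F1_bound hξ0
  have h4 : |F1 ξ| * (ξ + 2) ≤ 4 := by
    rw [← le_div_iff₀ (by linarith : (0:ℝ) < ξ + 2)]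
    exact hb
  rw [heq, abs_mul, abs_neg, Nat.abs_cast]
  nlinarith [mul_le_mul_of_nonneg_right (le_of_lt hξ.1) (abs_nonneg (F1 ξ)),
    abs_nonneg (F1 ξ)]

-- Part 3
lemma part3 (j : ℕ) : |(j : ℝ) ^ 2 * (bb j - bb (j + 1))| ≤ 32 := by
  obtain ⟨ξ0, hξ0, heq0⟩ := bb_eq j
  obtain ⟨ξ1, hξ1, heq1⟩ := bb_eq (j+1)
  have hc : ((j+1 : ℕ) : ℝ) = (j:ℝ) + 1 := by push_cast; ring
  rw [hc] at hξ1
  have hj0 : (0:ℝ) ≤ (j:ℝ) := Nat.cast_nonneg j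
  have h00 : (0:ℝ) ≤ ξ0 := by linarith [hξ0.1]
  have hle : ξ0 ≤ ξ1 := by linarith [hξ0.2, hξ1.1]
  have hlip := lipF1 h00 hle
  have hd : |bb j - bb (j+1)| = |F1 ξ1 - F1 ξ0| := by
    rw [heq0, heq1]
    rw [show -F1 ξ0 - -F1 ξ1 = F1 ξ1 - F1 ξ0 by ring]
  have hb1 : |bb j - bb (j+1)| ≤ 16/((j:ℝ)+2)^2 * 2 := by
    rw [hd]
    apply hlip.trans
    have e1 : 16/(ξ0+2)^2 ≤ 16/((j:ℝ)+2)^2 := by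
      apply div_le_div_of_nonneg_left (by norm_num) (by positivity)
      nlinarith [hξ0.1]
    have e2 : ξ1 - ξ0 ≤ 2 := by linarith [hξ1.2, hξ0.1]
    have e3 : (0:ℝ) ≤ ξ1 - ξ0 := by linarith
    nlinarith [div_nonneg (by norm_num : (0:ℝ) ≤ 16) (sq_nonneg ((j:ℝ)+2))]
  calc |(j : ℝ) ^ 2 * (bb j - bb (j + 1))|
      = (j:ℝ)^2 * |bb j - bb (j+1)| := by
        rw [abs_mul, abs_of_nonneg (by positivity : (0:ℝ) ≤ (j:ℝ)^2)]
    _ ≤ (j:ℝ)^2 * (16/((j:ℝ)+2)^2 * 2) := by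
        apply mul_le_mul_of_nonneg_left hb1 (by positivity)
    _ ≤ 32 := by
        rw [div_mul_eq_mul_div, mul_div_assoc', div_le_iff₀ (by positivity)]
        nlinarith

-- Window telescoping
lemma window (p j : ℕ) : ∑ i ∈ Finset.range p, bb (j + i) = FF j - FF ((j:ℝ) + p) := by
  have : ∀ i : ℕ, bb (j + i) = (fun i : ℕ => FF ((j:ℝ) + i)) i - (fun i : ℕ => FF ((j:ℝ) + i)) (i+1) := by
    intro i; unfold bb; push_cast; ring_nf
  rw [Finset.sum_congr rfl (fun i _ => this i), Finset.sum_range_sub' (fun i : ℕ => FF ((j:ℝ) + i)) p]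
  norm_num

-- Key inequality
lemma keyineq {p : ℕ} (hp : 1 ≤ p) (j : ℕ) :
    (p:ℝ) * |bb j| ≤ |∑ i ∈ Finset.range p, bb (j + i)| + 16*(p:ℝ)^2/((j:ℝ)+2)^2 := by
  have h := fun i : ℕ => bb_eq (j+i)
  choose ξ hmem heq using h
  have hcast : ∀ i : ℕ, ((j+i : ℕ):ℝ) = (j:ℝ) + i := by intro i; push_cast; ring
  have hlo : ∀ i : ℕ, (j:ℝ) + i < ξ i := by
    intro i; have := (hmem i).1; rwa [hcast i] at this
  have hhi : ∀ i : ℕ, ξ i < (j:ℝ) + i + 1 := by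
    intro i; have := (hmem i).2; rwa [hcast i] at this
  have hj0 : (0:ℝ) ≤ (j:ℝ) := Nat.cast_nonneg j
  have hξ00 : (0:ℝ) ≤ ξ 0 := by have := hlo 0; push_cast at this; linarith
  have hdiff : ∀ i ∈ Finset.range p, |F1 (ξ 0) - F1 (ξ i)| ≤ 16/((j:ℝ)+2)^2 * p := by
    intro i hi
    have hip : i < p := Finset.mem_range.1 hi
    rcases Nat.eq_zero_or_pos i with rfl | hi1
    · simp only [sub_self, abs_zero]
      positivity
    · have hi1' : (1:ℝ) ≤ (i:ℝ) := by exact_mod_cast hi1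
      have hle : ξ 0 ≤ ξ i := by
        have h1 := hhi 0
        have h2 := hlo i
        push_cast at h1
        linarith
      have := lipF1 hξ00 hle
      rw [abs_sub_comm]
      apply this.trans
      have e1 : 16/(ξ 0+2)^2 ≤ 16/((j:ℝ)+2)^2 := by
        apply div_le_div_of_nonneg_left (by norm_num) (by positivity)
        nlinarith [hlo 0]
      have e2 : ξ i - ξ 0 ≤ (p:ℝ) := by
        have h1 := hhi i
        have h2 := hlo 0
        have : (i:ℝ) + 1 ≤ (p:ℝ) := by exact_mod_cast hip
        push_cast at h2
        linarith
      have e3 : (0:ℝ) ≤ ξ i - ξ 0 := by linarith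
      apply mul_le_mul e1 e2 e3 (by positivity)
  have hsum : ∑ i ∈ Finset.range p, bb (j + i) = -∑ i ∈ Finset.range p, F1 (ξ i) := by
    rw [← Finset.sum_neg_distrib]
    exact Finset.sum_congr rfl (fun i _ => heq i)
  have hconst : (p:ℝ) * F1 (ξ 0) = ∑ _i ∈ Finset.range p, F1 (ξ 0) := by
    rw [Finset.sum_const, Finset.card_range, nsmul_eq_mul]
  have htri : |(p:ℝ) * F1 (ξ 0) - ∑ i ∈ Finset.range p, F1 (ξ i)|
      ≤ 16*(p:ℝ)^2/((j:ℝ)+2)^2 := by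
    rw [hconst, ← Finset.sum_sub_distrib]
    calc |∑ i ∈ Finset.range p, (F1 (ξ 0) - F1 (ξ i))|
        ≤ ∑ i ∈ Finset.range p, |F1 (ξ 0) - F1 (ξ i)| := Finset.abs_sum_le_sum_abs _ _
      _ ≤ ∑ _i ∈ Finset.range p, 16/((j:ℝ)+2)^2 * p := Finset.sum_le_sum hdiff
      _ = 16*(p:ℝ)^2/((j:ℝ)+2)^2 := by
          rw [Finset.sum_const, Finset.card_range, nsmul_eq_mul]
          field_simp
  have hbbj : |bb j| = |F1 (ξ 0)| := by
    have := heq 0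
    rw [Nat.add_zero] at this
    rw [this, abs_neg]
  rw [hbbj, hsum, abs_neg]
  have habs : (p:ℝ) * |F1 (ξ 0)| = |(p:ℝ) * F1 (ξ 0)| := by
    rw [abs_mul, abs_of_nonneg (by positivity : (0:ℝ) ≤ (p:ℝ))]
  rw [habs]
  calc |(p:ℝ) * F1 (ξ 0)|
      ≤ |∑ i ∈ Finset.range p, F1 (ξ i)| + |(p:ℝ) * F1 (ξ 0) - ∑ i ∈ Finset.range p, F1 (ξ i)| := by
        have := abs_sub_abs_le_abs_sub ((p:ℝ) * F1 (ξ 0)) (∑ i ∈ Finset.range p, F1 (ξ i))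
        linarith [abs_sub ((p:ℝ) * F1 (ξ 0)) (∑ i ∈ Finset.range p, F1 (ξ i))]
    _ ≤ |∑ i ∈ Finset.range p, F1 (ξ i)| + 16*(p:ℝ)^2/((j:ℝ)+2)^2 := by linarith [htri]

-- Part 4
lemma part4 {p : ℕ} (hp : 1 ≤ p) :
    ¬ Summable (fun j : ℕ => |∑ i ∈ Finset.range p, bb (j + i)|) := by
  intro hW
  apply core
  have hppos : (0:ℝ) < (p:ℝ) := by exact_mod_cast hp
  have hQ : Summable (fun j : ℕ => 16*(p:ℝ)^2/((j:ℝ)+2)^2) := by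
    have base : Summable (fun n : ℕ => (1:ℝ)/(n:ℝ)^2) :=
      summable_one_div_nat_pow.2 one_lt_two
    have shift := (_root_.summable_nat_add_iff (f := fun n : ℕ => (1:ℝ)/(n:ℝ)^2) 2).2 base
    have shift' : Summable (fun n : ℕ => (1:ℝ)/((n:ℝ)+2)^2) := by
      apply shift.congr
      intro n; push_cast; ring
    have := shift'.mul_left (16*(p:ℝ)^2)
    apply this.congr
    intro n
    field_simp
  have hsum := hW.add hQ
  have hcmp : Summable (fun j : ℕ => (p:ℝ) * |bb j|) := by
    apply Summable.of_nonneg_of_le (fun j => by positivity) (fun j => keyineq hp j) hsum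
  have := hcmp.mul_left (p:ℝ)⁻¹
  apply this.congr
  intro j
  field_simp

end LongRangeAux

/-- There exists a real sequence `b : ℤ₊ → ℝ` whose series converges,
with `(j·b_j)` and `(j²·(b_j − b_{j+1}))` bounded, but such that for every `p ≥ 1`
the series `Σ_j |b_j + b_{j+1} + … + b_{j+p−1}|` diverges. -/
theorem exists_sequence_longRange :
    ∃ b : ℕ → ℝ,
      (∃ L : ℝ, Tendsto (fun N => ∑ j ∈ Finset.range N, b j) atTop (nhds L)) ∧
      (∃ C : ℝ, ∀ j : ℕ, |(j : ℝ) * b j| ≤ C) ∧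
      (∃ C : ℝ, ∀ j : ℕ, |(j : ℝ) ^ 2 * (b j - b (j + 1))| ≤ C) ∧
      (∀ p : ℕ, 1 ≤ p → ¬ Summable (fun j : ℕ => |∑ i ∈ Finset.range p, b (j + i)|)) := by
  exact ⟨LongRangeAux.bb, LongRangeAux.part1, ⟨4, LongRangeAux.part2⟩,
    ⟨32, LongRangeAux.part3⟩, fun p hp => LongRangeAux.part4 hp⟩
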